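/- Fix λ > 0. Let V be the (finite-dimensional) linear span of the vectors k(z^p_1), …, k(z^p_{n_p}), k(z^q_1), …, k(z^q_{n_q}), and let P denote the orthogonal projection of H onto V. Then for every f ∈ H with f ∉ V one has F_λ(P f) < F_λ(f); consequently, every minimizer of F_λ over H lies in V, i.e., has the form Σ_{i=1}^{n_p} α_i k(z^p_i) + Σ_{j=1}^{n_q} β_j k(z^q_j) for some real coefficients α, β. (Proposition 1, representer theorem for regularized density ratio estimation.) -/

import Mathlib

/-- **Proposition 1, representer theorem for regularized DRE.**
Let `H` be a real inner product space, `k : Z → H` a kernel feature map, and fix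
sample points `zp : Fin np → Z`, `zq : Fin nq → Z` with `np, nq ≥ 1`.  Let
`J f = (1/(2 np)) ∑ i, ⟪f, k (zp i)⟫² − (1/nq) ∑ j, ⟪f, k (zq j)⟫` and
`F f = J f + (λ/2) ‖f‖²` with `λ > 0`.  Let `V` be the span of the sample feature
vectors and `P` the orthogonal projection of `H` onto `V` (characterized by
`P f ∈ V` and `f − P f ∈ Vᗮ`).  Then for every `f ∉ V` one has `F (P f) < F f`;
consequently every minimizer of `F` over `H` lies in `V`, i.e. has the form
`∑ i, α i • k (zp i) + ∑ j, β j • k (zq j)`. -/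
theorem stmt_0
    {H : Type*} [NormedAddCommGroup H] [InnerProductSpace ℝ H]
    {Z : Type*} (k : Z → H)
    (np nq : ℕ) (hnp : 1 ≤ np) (hnq : 1 ≤ nq)
    (zp : Fin np → Z) (zq : Fin nq → Z)
    (lam : ℝ) (hlam : 0 < lam)
    (J F : H → ℝ)
    (hJ : ∀ f : H, J f = (1 / (2 * (np : ℝ))) * ∑ i, (inner ℝ f (k (zp i)) : ℝ) ^ 2
        - (1 / (nq : ℝ)) * ∑ j, (inner ℝ f (k (zq j)) : ℝ))
    (hF : ∀ f : H, F f = J f + (lam / 2) * ‖f‖ ^ 2)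
    (V : Submodule ℝ H)
    (hV : V = Submodule.span ℝ
      (Set.range (fun i => k (zp i)) ∪ Set.range (fun j => k (zq j))))
    (P : H → H)
    (hP : ∀ f : H, P f ∈ V ∧ f - P f ∈ Vᗮ) :
    (∀ f : H, f ∉ V → F (P f) < F f) ∧
      (∀ f : H, (∀ g : H, F f ≤ F g) →
        ∃ (α : Fin np → ℝ) (β : Fin nq → ℝ),
          f = ∑ i, α i • k (zp i) + ∑ j, β j • k (zq j)) := by
  -- key: inner products with elements of V are preserved by P
  have hinner : ∀ (f : H) (v : H), v ∈ V → (inner ℝ (P f) v : ℝ) = inner ℝ f v := by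
    intro f v hv
    have h0 : (inner ℝ v (f - P f) : ℝ) = 0 := (hP f).2 v hv
    have h0' : (inner ℝ (f - P f) v : ℝ) = 0 := by
      rw [real_inner_comm]; exact h0
    have : (inner ℝ f v : ℝ) - inner ℝ (P f) v = 0 := by
      rw [← inner_sub_left]; exact h0'
    linarith
  have hkp : ∀ i, k (zp i) ∈ V := by
    intro i; rw [hV]
    exact Submodule.subset_span (Or.inl ⟨i, rfl⟩)
  have hkq : ∀ j, k (zq j) ∈ V := by
    intro j; rw [hV]
    exact Submodule.subset_span (Or.inr ⟨j, rfl⟩)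
  have hJeq : ∀ f : H, J (P f) = J f := by
    intro f
    have h1 : ∑ i, (inner ℝ (P f) (k (zp i)) : ℝ) ^ 2
        = ∑ i, (inner ℝ f (k (zp i)) : ℝ) ^ 2 :=
      Finset.sum_congr rfl fun i _ => by rw [hinner f _ (hkp i)]
    have h2 : ∑ j, (inner ℝ (P f) (k (zq j)) : ℝ)
        = ∑ j, (inner ℝ f (k (zq j)) : ℝ) :=
      Finset.sum_congr rfl fun j _ => by rw [hinner f _ (hkq j)]
    rw [hJ, hJ, h1, h2]
  have hmain : ∀ f : H, f ∉ V → F (P f) < F f := by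
    intro f hf
    have hne : f - P f ≠ 0 := by
      intro h
      apply hf
      have : f = P f := by
        have := sub_eq_zero.mp h; exact this
      rw [this]; exact (hP f).1
    have horth : (inner ℝ (P f) (f - P f) : ℝ) = 0 := (hP f).2 (P f) (hP f).1
    have hpyth : ‖f‖ ^ 2 = ‖P f‖ ^ 2 + ‖f - P f‖ ^ 2 := by
      have : f = P f + (f - P f) := by abel
      calc ‖f‖ ^ 2 = ‖P f + (f - P f)‖ ^ 2 := by rw [← this]
        _ = ‖P f‖ ^ 2 + 2 * inner ℝ (P f) (f - P f) + ‖f - P f‖ ^ 2 :=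
            norm_add_sq_real _ _
        _ = ‖P f‖ ^ 2 + ‖f - P f‖ ^ 2 := by rw [horth]; ring
    have hpos : 0 < ‖f - P f‖ ^ 2 := pow_pos (norm_pos_iff.mpr hne) 2
    have hlt : ‖P f‖ ^ 2 < ‖f‖ ^ 2 := by rw [hpyth]; linarith
    rw [hF, hF, hJeq]
    have : (lam / 2) * ‖P f‖ ^ 2 < (lam / 2) * ‖f‖ ^ 2 := by
      apply mul_lt_mul_of_pos_left hlt; linarith
    linarith
  refine ⟨hmain, ?_⟩
  intro f hmin
  have hfV : f ∈ V := by
    by_contra hf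
    exact absurd (hmin (P f)) (not_le.mpr (hmain f hf))
  -- express f as a combination
  rw [hV] at hfV
  have : Set.range (fun i => k (zp i)) ∪ Set.range (fun j => k (zq j))
      = Set.range (Sum.elim (fun i => k (zp i)) (fun j => k (zq j))) := by
    rw [Set.Sum.elim_range]
  rw [this] at hfV
  obtain ⟨c, hc⟩ := (Finsupp.mem_span_range_iff_exists_finsupp).mp hfV
  refine ⟨fun i => c (Sum.inl i), fun j => c (Sum.inr j), ?_⟩
  rw [← hc]
  rw [Finsupp.sum_fintype]
  · rw [Fintype.sum_sum_type]; rfl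
  · intro a; exact zero_smul ℝ _
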